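/- arXiv:2206.13285 — 5 statements merged into one kernel-verified Lean document; each statement's English description precedes it below -/
import Mathlib

section
/- Let f : (0,∞) → ℝ be convex. For all p, q > 0, the perspective value q·f(p/q) equals the supremum over (v,w) ∈ ℝ² of v·p + w·q subject to the constraint that r·v + w ≤ f(r) for all r ≥ 0 (with f(0) interpreted as the limit, possibly +∞). -/
open Set

/-- Variational representation of the perspective function: for `f` convex on `(0,∞)`
and `p, q > 0`, `q * f (p / q)` is the least upper bound of `v * p + w * q` over pairs
`(v, w)` satisfying `r * v + w ≤ f r` for all `r > 0`. -/
theorem stmt1 (f : ℝ → ℝ) (hconv : ConvexOn ℝ (Ioi (0:ℝ)) f)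
    (p q : ℝ) (hp : 0 < p) (hq : 0 < q) :
    IsLUB {z : ℝ | ∃ v w : ℝ, (∀ r : ℝ, 0 < r → r * v + w ≤ f r) ∧ z = v * p + w * q}
      (q * f (p / q)) := by
  set x₀ : ℝ := p / q with hx₀def
  have hx₀ : 0 < x₀ := div_pos hp hq
  have hx₀q : x₀ * q = p := div_mul_cancel₀ p hq.ne'
  constructor
  · rintro z ⟨v, w, hvw, rfl⟩
    have h := hvw x₀ hx₀
    have h2 : q * (x₀ * v + w) ≤ q * f x₀ := mul_le_mul_of_nonneg_left h hq.le
    have h3 : v * p + w * q = q * (x₀ * v + w) := by rw [← hx₀q]; ring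
    linarith
  · intro b hb
    -- construct a supporting line at x₀
    set S : Set ℝ := (fun a => (f x₀ - f a) / (x₀ - a)) '' Ioo 0 x₀ with hS
    have hne : S.Nonempty := ⟨_, ⟨x₀ / 2, ⟨half_pos hx₀, half_lt_self hx₀⟩, rfl⟩⟩
    have hbdd : BddAbove S := by
      refine ⟨(f (x₀ + 1) - f x₀) / (x₀ + 1 - x₀), ?_⟩
      rintro s ⟨a, ⟨ha0, hax⟩, rfl⟩
      have := hconv.slope_mono_adjacent (x := a) (y := x₀) (z := x₀ + 1)
        (mem_Ioi.mpr ha0) (mem_Ioi.mpr (by linarith)) hax (by linarith)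
      linarith [this]
    set v : ℝ := sSup S with hv
    set w : ℝ := f x₀ - v * x₀ with hw
    have key : ∀ r : ℝ, 0 < r → r * v + w ≤ f r := by
      intro r hr
      rcases lt_trichotomy r x₀ with h | h | h
      · have hmem : (f x₀ - f r) / (x₀ - r) ∈ S := ⟨r, ⟨hr, h⟩, rfl⟩
        have hle : (f x₀ - f r) / (x₀ - r) ≤ v := le_csSup hbdd hmem
        have hpos : 0 < x₀ - r := by linarith
        rw [div_le_iff₀ hpos] at hle
        nlinarith
      · subst h; simp [hw]; ring_nf; simp
      · have hle : v ≤ (f r - f x₀) / (r - x₀) := by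
          apply csSup_le hne
          rintro s ⟨a, ⟨ha0, hax⟩, rfl⟩
          have := hconv.slope_mono_adjacent (x := a) (y := x₀) (z := r)
            (mem_Ioi.mpr ha0) (mem_Ioi.mpr (by linarith)) hax h
          linarith [this]
        have hpos : 0 < r - x₀ := by linarith
        rw [le_div_iff₀ hpos] at hle
        nlinarith
    have hmem : q * f x₀ ∈ {z : ℝ | ∃ v w : ℝ, (∀ r : ℝ, 0 < r → r * v + w ≤ f r) ∧ z = v * p + w * q} := by
      refine ⟨v, w, key, ?_⟩
      rw [hw, ← hx₀q]; ring
    exact hb hmem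
end

section
/- Let f : (0,∞) → ℝ be convex, f(1) = 0, and strictly convex at 1. If p and q are probability measures with p ≪ q and D(p‖q) = 0, then p = q. -/
open MeasureTheory Set

/-- Supporting line at 1 for a convex function on `[0,∞)` with `f 1 = 0`. -/
lemma support_line_at_one {f : ℝ → ℝ} (hconv : ConvexOn ℝ (Ici (0:ℝ)) f)
    (hf1 : f 1 = 0) :
    ∃ c : ℝ, ∀ x : ℝ, 0 ≤ x → c * (x - 1) ≤ f x := by
  -- c := sup of left slopes at 1
  set S : Set ℝ := (fun x => (f 1 - f x) / (1 - x)) '' (Ico (0:ℝ) 1) with hS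
  have hne : S.Nonempty := ⟨(f 1 - f 0) / (1 - 0), ⟨0, by simp, rfl⟩⟩
  -- every left slope is ≤ any right slope
  have key : ∀ x ∈ Ico (0:ℝ) 1, ∀ y : ℝ, 1 < y →
      (f 1 - f x) / (1 - x) ≤ (f y - f 1) / (y - 1) := by
    intro x hx y hy
    exact hconv.slope_mono_adjacent hx.1 (le_of_lt (lt_trans one_pos hy))
      hx.2 hy
  have hbdd : BddAbove S := by
    refine ⟨(f 2 - f 1) / (2 - 1), ?_⟩
    rintro _ ⟨x, hx, rfl⟩
    exact key x hx 2 one_lt_two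
  set c := sSup S with hc
  refine ⟨c, fun x hx => ?_⟩
  rcases lt_trichotomy x 1 with h | h | h
  · have hmem : (f 1 - f x) / (1 - x) ∈ S := ⟨x, ⟨hx, h⟩, rfl⟩
    have hle : (f 1 - f x) / (1 - x) ≤ c := le_csSup hbdd hmem
    have h1x : (0:ℝ) < 1 - x := by linarith
    rw [div_le_iff₀ h1x] at hle
    nlinarith
  · simp [h, hf1]
  · have hle : c ≤ (f x - f 1) / (x - 1) := by
      apply csSup_le hne
      rintro _ ⟨t, ht, rfl⟩
      exact key t ht x h
    have hx1 : (0:ℝ) < x - 1 := by linarith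
    rw [le_div_iff₀ hx1] at hle
    linarith

/-- If `f` is convex on `[0,∞)` with `f 1 = 0` and strictly convex at `1`, and `p ≪ q`
are probability measures with `D(p‖q) = ∫ f (dp/dq) dq = 0`, then `p = q`. -/
theorem stmt8 {X : Type*} [MeasurableSpace X]
    (p q : Measure X) [IsProbabilityMeasure p] [IsProbabilityMeasure q]
    (hpq : p ≪ q)
    (f : ℝ → ℝ) (hconv : ConvexOn ℝ (Ici (0:ℝ)) f) (hf1 : f 1 = 0)
    (hstrict : ∀ x y : ℝ, 0 ≤ x → x < 1 → 1 < y → ∀ a b : ℝ, 0 < a → 0 < b →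
      a + b = 1 → a * x + b * y = 1 → f 1 < a * f x + b * f y)
    (hint : Integrable (fun x => f ((p.rnDeriv q x).toReal)) q)
    (hD : ∫ x, f ((p.rnDeriv q x).toReal) ∂q = 0) :
    p = q := by
  set g : X → ℝ := fun x => (p.rnDeriv q x).toReal with hg
  have hgmeas : Measurable g := (Measure.measurable_rnDeriv p q).ennreal_toReal
  have hgnn : ∀ x, 0 ≤ g x := fun x => ENNReal.toReal_nonneg
  have hgint : Integrable g q := Measure.integrable_toReal_rnDeriv
  have hgavg : ∫ x, g x ∂q = 1 := by
    rw [hg]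
    rw [Measure.integral_toReal_rnDeriv hpq]
    simp
  obtain ⟨c, hc⟩ := support_line_at_one hconv hf1
  -- h := f(g x) - c (g x - 1) is nonneg with zero integral
  set h : X → ℝ := fun x => f (g x) - c * (g x - 1) with hh
  have hhnn : ∀ x, 0 ≤ h x := fun x => sub_nonneg.mpr (hc (g x) (hgnn x))
  have hhint : Integrable h q := by
    apply hint.sub
    exact ((hgint.sub (integrable_const 1)).const_mul c)
  have hint2 : Integrable (fun x => c * (g x - 1)) q := by
    exact (hgint.sub (integrable_const 1)).const_mul c
  have hhzero : ∫ x, h x ∂q = 0 := by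
    rw [hh]
    rw [integral_sub hint hint2]
    rw [hD, integral_const_mul, integral_sub hgint (integrable_const 1), hgavg]
    simp
  have hae : ∀ᵐ x ∂q, h x = 0 := by
    have := (integral_eq_zero_iff_of_nonneg (fun x => hhnn x) hhint).mp hhzero
    filter_upwards [this.le.trans (Filter.EventuallyEq.refl _ _).le] with x hx
    · exact le_antisymm hx (hhnn x)
  -- On {h = 0}, f(g x) = c (g x - 1)
  have haeq : ∀ᵐ x ∂q, f (g x) = c * (g x - 1) := by
    filter_upwards [hae] with x hx
    have : f (g x) - c * (g x - 1) = 0 := hx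
    linarith
  -- Claim: g = 1 a.e.
  have hg1 : ∀ᵐ x ∂q, g x = 1 := by
    by_cases hB : q {x | 1 < g x} = 0
    · -- then g ≤ 1 a.e.; since mean is 1, g = 1 a.e.
      have hle : ∀ᵐ x ∂q, g x ≤ 1 := by
        rw [ae_iff]
        convert hB using 2
        ext x; simp [not_le]
      have h1g : ∀ᵐ x ∂q, 0 ≤ 1 - g x := by
        filter_upwards [hle] with x hx; linarith
      have hint1g : Integrable (fun x => 1 - g x) q :=
        (integrable_const 1).sub hgint
      have hz : ∫ x, (1 - g x) ∂q = 0 := by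
        rw [integral_sub (integrable_const 1) hgint, hgavg]; simp
      have := (integral_eq_zero_iff_of_nonneg_ae h1g hint1g).mp hz
      filter_upwards [this] with x hx
      have : (1:ℝ) - g x = 0 := hx
      linarith
    · by_cases hA : q {x | g x < 1} = 0
      · have hge : ∀ᵐ x ∂q, 1 ≤ g x := by
          rw [ae_iff]
          convert hA using 2
          ext x; simp [not_le]
        have h1g : ∀ᵐ x ∂q, 0 ≤ g x - 1 := by
          filter_upwards [hge] with x hx; linarith
        have hint1g : Integrable (fun x => g x - 1) q := hgint.sub (integrable_const 1)
        have hz : ∫ x, (g x - 1) ∂q = 0 := by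
          rw [integral_sub hgint (integrable_const 1), hgavg]; simp
        have := (integral_eq_zero_iff_of_nonneg_ae h1g hint1g).mp hz
        filter_upwards [this] with x hx
        have : g x - 1 = 0 := hx
        linarith
      · -- both sets have positive measure: contradiction with strict convexity
        exfalso
        have hAmeas : MeasurableSet {x | g x < 1} := hgmeas measurableSet_Iio
        have hBmeas : MeasurableSet {x | 1 < g x} := hgmeas measurableSet_Ioi
        -- pick a point in A where the a.e. identity holds
        obtain ⟨a, ha1, ha2⟩ : ∃ a, g a < 1 ∧ f (g a) = c * (g a - 1) := by
          have hEc : q {x | ¬ f (g x) = c * (g x - 1)} = 0 := by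
            rw [← ae_iff]; exact haeq
          have hpos : q ({x | g x < 1} ∩ {x | f (g x) = c * (g x - 1)}) ≠ 0 := by
            intro hcontra
            apply hA
            have hsub : {x | g x < 1} ⊆ ({x | g x < 1} ∩ {x | f (g x) = c * (g x - 1)}) ∪
                {x | ¬ f (g x) = c * (g x - 1)} := by
              intro x hx
              by_cases hfx : f (g x) = c * (g x - 1)
              · exact Or.inl ⟨hx, hfx⟩
              · exact Or.inr hfx
            have hle2 : q {x | g x < 1} ≤
                q ({x | g x < 1} ∩ {x | f (g x) = c * (g x - 1)}) +
                q {x | ¬ f (g x) = c * (g x - 1)} :=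
              (measure_mono hsub).trans (measure_union_le _ _)
            rw [hcontra, hEc, add_zero] at hle2
            exact le_antisymm hle2 zero_le
          obtain ⟨a, ha⟩ := nonempty_of_measure_ne_zero hpos
          exact ⟨a, ha.1, ha.2⟩
        obtain ⟨b, hb1, hb2⟩ : ∃ b, 1 < g b ∧ f (g b) = c * (g b - 1) := by
          have hEc : q {x | ¬ f (g x) = c * (g x - 1)} = 0 := by
            rw [← ae_iff]; exact haeq
          have hpos : q ({x | 1 < g x} ∩ {x | f (g x) = c * (g x - 1)}) ≠ 0 := by
            intro hcontra
            apply hB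
            have hsub : {x | 1 < g x} ⊆ ({x | 1 < g x} ∩ {x | f (g x) = c * (g x - 1)}) ∪
                {x | ¬ f (g x) = c * (g x - 1)} := by
              intro x hx
              by_cases hfx : f (g x) = c * (g x - 1)
              · exact Or.inl ⟨hx, hfx⟩
              · exact Or.inr hfx
            have hle2 : q {x | 1 < g x} ≤
                q ({x | 1 < g x} ∩ {x | f (g x) = c * (g x - 1)}) +
                q {x | ¬ f (g x) = c * (g x - 1)} :=
              (measure_mono hsub).trans (measure_union_le _ _)
            rw [hcontra, hEc, add_zero] at hle2
            exact le_antisymm hle2 zero_le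
          obtain ⟨b, hb⟩ := nonempty_of_measure_ne_zero hpos
          exact ⟨b, hb.1, hb.2⟩
        set x0 := g a
        set y0 := g b
        have hxy : x0 < y0 := lt_trans ha1 hb1
        have hd : (0:ℝ) < y0 - x0 := by linarith
        set α := (y0 - 1) / (y0 - x0)
        set β := (1 - x0) / (y0 - x0)
        have hα : 0 < α := div_pos (by linarith) hd
        have hβ : 0 < β := div_pos (by linarith) hd
        have hab : α + β = 1 := by
          show (y0 - 1) / (y0 - x0) + (1 - x0) / (y0 - x0) = 1
          field_simp
          ring
        have hcomb : α * x0 + β * y0 = 1 := by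
          show (y0 - 1) / (y0 - x0) * x0 + (1 - x0) / (y0 - x0) * y0 = 1
          field_simp
          ring
        have hlt := hstrict x0 y0 (hgnn a) ha1 hb1 α β hα hβ hab hcomb
        rw [hf1, ha2, hb2] at hlt
        have hzero : α * (c * (x0 - 1)) + β * (c * (y0 - 1)) =
            c * ((α * x0 + β * y0) - (α + β)) := by ring
        rw [hcomb, hab] at hzero
        simp at hzero
        linarith
  -- conclude p = q
  have hrn : p.rnDeriv q =ᵐ[q] 1 := by
    filter_upwards [hg1, Measure.rnDeriv_lt_top p q] with x hx hlt
    have : ((p.rnDeriv q x).toReal : ℝ) = 1 := hx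
    have := (ENNReal.toReal_eq_one_iff _).mp this
    simpa using this
  calc p = q.withDensity (p.rnDeriv q) := (Measure.withDensity_rnDeriv_eq p q hpq).symm
    _ = q.withDensity 1 := withDensity_congr_ae hrn
    _ = q := by simp
end

section
/- Let X be a finite measurable space (or a general space), q a finite positive measure, f strictly convex differentiable on (0,∞) with f(1)=0, and h : X → ℝ bounded. Then sup over probability measures p ≪ q of (∫ h dp - D(p‖q)) equals inf over ρ ∈ ℝ of (ρ + ∫ f*(h(x) - ρ) dq(x)), where f* is the Fenchel conjugate of f. -/
open Set Finset

open Filter Topology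

section FPartitionAux

variable {f : ℝ → ℝ}

/-- Tangent line inequality for a convex differentiable function on `(0,∞)`. -/
private lemma fp_tangent_le (hconv : StrictConvexOn ℝ (Ioi (0:ℝ)) f)
    (hdiff : ∀ x ∈ Ioi (0:ℝ), DifferentiableAt ℝ f x)
    {x t : ℝ} (hx : 0 < x) (ht : 0 < t) :
    f x + deriv f x * (t - x) ≤ f t := by
  rcases lt_trichotomy x t with hlt | rfl | hgt
  · have hs := hconv.convexOn.deriv_le_slope (Set.mem_Ioi.2 hx) (Set.mem_Ioi.2 ht) hlt (hdiff x hx)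
    rw [slope_def_field] at hs
    have h' : deriv f x * (t - x) ≤ f t - f x := by
      rw [← le_div_iff₀ (by linarith)]; exact hs
    linarith
  · simp
  · have hs := hconv.convexOn.slope_le_deriv (Set.mem_Ioi.2 ht) (Set.mem_Ioi.2 hx) hgt (hdiff x hx)
    rw [slope_def_field] at hs
    have h' : f x - f t ≤ deriv f x * (x - t) := by
      rw [← div_le_iff₀ (by linarith)]; exact hs
    linarith

/-- Tangent line inequality extended to `t = 0` by continuity. -/
private lemma fp_tangent_zero (hconv : StrictConvexOn ℝ (Ioi (0:ℝ)) f)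
    (hdiff : ∀ x ∈ Ioi (0:ℝ), DifferentiableAt ℝ f x)
    (hcont : ContinuousWithinAt f (Ici (0:ℝ)) 0)
    {x : ℝ} (hx : 0 < x) :
    f x + deriv f x * (0 - x) ≤ f 0 := by
  have h1 : Tendsto (fun s : ℝ => f x + deriv f x * (s - x)) (𝓝[>] (0:ℝ))
      (𝓝 (f x + deriv f x * (0 - x))) := by
    apply Tendsto.mono_left _ nhdsWithin_le_nhds
    exact (continuous_const.add (continuous_const.mul (continuous_id.sub continuous_const))).tendsto 0
  have h2 : Tendsto f (𝓝[>] (0:ℝ)) (𝓝 (f 0)) := hcont.mono Ioi_subset_Ici_self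
  refine le_of_tendsto_of_tendsto h1 h2 ?_
  filter_upwards [self_mem_nhdsWithin] with s hs
  exact fp_tangent_le hconv hdiff hx hs

variable {fstar : ℝ → ℝ}

private lemma fp_le_fstar
    (hfstar : ∀ u : ℝ, IsLUB {z : ℝ | ∃ t : ℝ, 0 < t ∧ z = u * t - f t} (fstar u))
    {u t : ℝ} (ht : 0 < t) : u * t - f t ≤ fstar u :=
  (hfstar u).1 ⟨t, ht, rfl⟩

private lemma fp_neg_f0_le_fstar
    (hcont : ContinuousWithinAt f (Ici (0:ℝ)) 0)
    (hfstar : ∀ u : ℝ, IsLUB {z : ℝ | ∃ t : ℝ, 0 < t ∧ z = u * t - f t} (fstar u))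
    (u : ℝ) : -f 0 ≤ fstar u := by
  have h1 : Tendsto (fun s : ℝ => u * s - f s) (𝓝[>] (0:ℝ)) (𝓝 (u * 0 - f 0)) := by
    exact (Tendsto.mono_left ((continuous_const.mul continuous_id).tendsto 0)
      nhdsWithin_le_nhds).sub (hcont.mono Ioi_subset_Ici_self)
  have h2 : ∀ᶠ s in 𝓝[>] (0:ℝ), u * s - f s ≤ fstar u := by
    filter_upwards [self_mem_nhdsWithin] with s hs
    exact fp_le_fstar hfstar hs
  have := le_of_tendsto h1 h2
  linarith

/-- The derivative of `f` is unbounded above, because `fstar` is finite everywhere. -/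
private lemma fp_exists_deriv_gt (hconv : StrictConvexOn ℝ (Ioi (0:ℝ)) f)
    (hdiff : ∀ x ∈ Ioi (0:ℝ), DifferentiableAt ℝ f x) (hf1 : f 1 = 0)
    (hfstar : ∀ u : ℝ, IsLUB {z : ℝ | ∃ t : ℝ, 0 < t ∧ z = u * t - f t} (fstar u))
    (u : ℝ) : ∃ t : ℝ, 0 < t ∧ u < deriv f t := by
  set C := fstar (u + 1)
  set s : ℝ := max 2 (C - u + 1) with hs
  have hs2 : (2:ℝ) ≤ s := le_max_left _ _
  have hs1 : (1:ℝ) < s := by linarith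
  have hsC : C - u + 1 ≤ s := le_max_right _ _
  refine ⟨s, by linarith, ?_⟩
  have hfs : (u + 1) * s - f s ≤ C := fp_le_fstar hfstar (by linarith)
  have hslope := hconv.convexOn.slope_le_deriv (Set.mem_Ioi.2 (by norm_num : (0:ℝ) < 1))
    (Set.mem_Ioi.2 (by linarith : (0:ℝ) < s)) hs1 (hdiff s (Set.mem_Ioi.2 (by linarith)))
  rw [slope_def_field, hf1] at hslope
  have hlt : u < (f s - 0) / (s - 1) := by
    rw [lt_div_iff₀ (show (0:ℝ) < s - 1 by linarith)]
    nlinarith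
  linarith

open Classical in
private noncomputable def Tmap (f : ℝ → ℝ) (u : ℝ) : ℝ :=
  if h : ∃ t : ℝ, 0 < t ∧ deriv f t = u then h.choose else 0

private lemma fp_Tmap_spec (hconv : StrictConvexOn ℝ (Ioi (0:ℝ)) f)
    (hdiff : ∀ x ∈ Ioi (0:ℝ), DifferentiableAt ℝ f x) (hf1 : f 1 = 0)
    (hfstar : ∀ u : ℝ, IsLUB {z : ℝ | ∃ t : ℝ, 0 < t ∧ z = u * t - f t} (fstar u))
    (u : ℝ) :
    (0 < Tmap f u ∧ deriv f (Tmap f u) = u) ∨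
      (Tmap f u = 0 ∧ ∀ t : ℝ, 0 < t → u < deriv f t) := by
  unfold Tmap
  split_ifs with hex
  · exact Or.inl ⟨hex.choose_spec.1, hex.choose_spec.2⟩
  · refine Or.inr ⟨rfl, fun t ht => ?_⟩
    by_contra hle
    push_neg at hle
    rcases eq_or_lt_of_le hle with heq | hlt
    · exact hex ⟨t, ht, heq⟩
    · obtain ⟨t1, ht1, hgt⟩ := fp_exists_deriv_gt hconv hdiff hf1 hfstar u
      have hsm := hconv.strictMonoOn_deriv hdiff
      have htt1 : t < t1 := by
        by_contra hc
        push_neg at hc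
        rcases eq_or_lt_of_le hc with rfl | hlt2
        · exact absurd hgt (by linarith)
        · have := hsm (Set.mem_Ioi.2 ht1) (Set.mem_Ioi.2 ht) hlt2
          linarith
      have hder : ∀ x ∈ Icc t t1, HasDerivWithinAt f (deriv f x) (Icc t t1) x := fun x hx =>
        ((hdiff x (by simp only [Set.mem_Ioi]; linarith [hx.1])).hasDerivAt).hasDerivWithinAt
      obtain ⟨c, hcmem, hceq⟩ := exists_hasDerivWithinAt_eq_of_gt_of_lt htt1.le hder hlt hgt
      exact hex ⟨c, lt_trans ht hcmem.1, hceq⟩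

private lemma fp_Tmap_nonneg (hconv : StrictConvexOn ℝ (Ioi (0:ℝ)) f)
    (hdiff : ∀ x ∈ Ioi (0:ℝ), DifferentiableAt ℝ f x) (hf1 : f 1 = 0)
    (hfstar : ∀ u : ℝ, IsLUB {z : ℝ | ∃ t : ℝ, 0 < t ∧ z = u * t - f t} (fstar u))
    (u : ℝ) : 0 ≤ Tmap f u := by
  rcases fp_Tmap_spec hconv hdiff hf1 hfstar (fstar := fstar) u with ⟨h, _⟩ | ⟨h, _⟩
  · exact h.le
  · exact le_of_eq h.symm

private lemma fp_Tmap_deriv (hconv : StrictConvexOn ℝ (Ioi (0:ℝ)) f)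
    (hdiff : ∀ x ∈ Ioi (0:ℝ), DifferentiableAt ℝ f x) (hf1 : f 1 = 0)
    (hfstar : ∀ u : ℝ, IsLUB {z : ℝ | ∃ t : ℝ, 0 < t ∧ z = u * t - f t} (fstar u))
    {t : ℝ} (ht : 0 < t) : Tmap f (deriv f t) = t := by
  have hsm := hconv.strictMonoOn_deriv hdiff
  rcases fp_Tmap_spec hconv hdiff hf1 hfstar (fstar := fstar) (deriv f t) with ⟨hpos, heq⟩ | ⟨_, hall⟩
  · by_contra hne
    rcases lt_or_gt_of_ne hne with hlt | hgt
    · have := hsm (Set.mem_Ioi.2 hpos) (Set.mem_Ioi.2 ht) hlt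
      rw [heq] at this; exact lt_irrefl _ this
    · have := hsm (Set.mem_Ioi.2 ht) (Set.mem_Ioi.2 hpos) hgt
      rw [heq] at this; exact lt_irrefl _ this
  · exact absurd (hall t ht) (lt_irrefl _)

/-- The key formula: the conjugate is attained at `Tmap f u` (with the convention `Tmap = 0`
when the sup is only attained in the limit `t → 0`). -/
private lemma fp_fstar_eq (hconv : StrictConvexOn ℝ (Ioi (0:ℝ)) f)
    (hdiff : ∀ x ∈ Ioi (0:ℝ), DifferentiableAt ℝ f x) (hf1 : f 1 = 0)
    (hcont : ContinuousWithinAt f (Ici (0:ℝ)) 0)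
    (hfstar : ∀ u : ℝ, IsLUB {z : ℝ | ∃ t : ℝ, 0 < t ∧ z = u * t - f t} (fstar u))
    (u : ℝ) : fstar u = u * Tmap f u - f (Tmap f u) := by
  rcases fp_Tmap_spec hconv hdiff hf1 hfstar (fstar := fstar) u with ⟨hpos, heq⟩ | ⟨hz, hall⟩
  · refine (hfstar u).unique ⟨?_, ?_⟩
    · rintro z ⟨t, ht, rfl⟩
      have htan := fp_tangent_le hconv hdiff hpos ht
      rw [heq] at htan
      nlinarith [htan]
    · intro b hb
      exact hb ⟨Tmap f u, hpos, rfl⟩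
  · rw [hz]
    have hlub : IsLUB {z : ℝ | ∃ t : ℝ, 0 < t ∧ z = u * t - f t} (u * 0 - f 0) := by
      constructor
      · rintro z ⟨t, ht, rfl⟩
        -- show u * t - f t ≤ u * 0 - f 0, i.e. f 0 + u * t ≤ f t
        have h1 : Tendsto (fun s : ℝ => f s + u * (t - s)) (𝓝[>] (0:ℝ))
            (𝓝 (f 0 + u * (t - 0))) := by
          exact ((hcont.mono Ioi_subset_Ici_self).tendsto).add
            (Tendsto.mono_left ((continuous_const.mul
              (continuous_const.sub continuous_id)).tendsto 0) nhdsWithin_le_nhds)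
        have h2 : ∀ᶠ s in 𝓝[>] (0:ℝ), f s + u * (t - s) ≤ f t := by
          filter_upwards [self_mem_nhdsWithin,
            mem_nhdsWithin_of_mem_nhds (Iio_mem_nhds ht)] with s hs hst
          simp only [Set.mem_Ioi] at hs
          simp only [Set.mem_Iio] at hst
          have htan := fp_tangent_le hconv hdiff hs ht
          have hd : u < deriv f s := hall s hs
          have h3 : u * (t - s) ≤ deriv f s * (t - s) :=
            mul_le_mul_of_nonneg_right hd.le (by linarith)
          linarith
        have := le_of_tendsto h1 h2
        nlinarith [this]
      · intro b hb
        have h1 : Tendsto (fun s : ℝ => u * s - f s) (𝓝[>] (0:ℝ)) (𝓝 (u * 0 - f 0)) :=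
          (Tendsto.mono_left ((continuous_const.mul continuous_id).tendsto 0)
            nhdsWithin_le_nhds).sub (hcont.mono Ioi_subset_Ici_self)
        refine le_of_tendsto h1 ?_
        filter_upwards [self_mem_nhdsWithin] with s hs
        exact hb ⟨s, hs, rfl⟩
    exact (hfstar u).unique hlub

private lemma fp_Tmap_continuous (hconv : StrictConvexOn ℝ (Ioi (0:ℝ)) f)
    (hdiff : ∀ x ∈ Ioi (0:ℝ), DifferentiableAt ℝ f x) (hf1 : f 1 = 0)
    (hfstar : ∀ u : ℝ, IsLUB {z : ℝ | ∃ t : ℝ, 0 < t ∧ z = u * t - f t} (fstar u)) :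
    Continuous (Tmap f) := by
  have hsm := hconv.strictMonoOn_deriv hdiff
  rw [continuous_iff_continuousAt]
  intro u0
  rw [Metric.continuousAt_iff]
  intro ε hε
  set t0 := Tmap f u0 with ht0
  have ht0nn : 0 ≤ t0 := fp_Tmap_nonneg hconv hdiff hf1 hfstar u0
  have hr : u0 < deriv f (t0 + ε / 2) := by
    rcases fp_Tmap_spec hconv hdiff hf1 hfstar (fstar := fstar) u0 with ⟨hpos, heq⟩ | ⟨hz, hall⟩
    · rw [← heq]
      exact hsm (Set.mem_Ioi.2 hpos) (Set.mem_Ioi.2 (by linarith)) (by linarith)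
    · have h0 : t0 = 0 := ht0.trans hz
      exact hall _ (by linarith)
  have keyR : ∀ u : ℝ, u < deriv f (t0 + ε / 2) → Tmap f u < t0 + ε := by
    intro u hu
    rcases fp_Tmap_spec hconv hdiff hf1 hfstar (fstar := fstar) u with ⟨hpos, heq⟩ | ⟨hz, _⟩
    · by_contra hge
      push_neg at hge
      have := hsm (Set.mem_Ioi.2 (by linarith : (0:ℝ) < t0 + ε / 2)) (Set.mem_Ioi.2 hpos) (by linarith)
      rw [heq] at this
      linarith
    · rw [hz]; linarith
  by_cases hcase : t0 < ε
  · -- left bound is trivial: Tmap ≥ 0 > t0 - ε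
    refine ⟨deriv f (t0 + ε / 2) - u0, by linarith, fun {u} hu => ?_⟩
    rw [Real.dist_eq] at hu ⊢
    rw [abs_lt] at hu ⊢
    have hR := keyR u (by linarith [hu.2])
    have hL := fp_Tmap_nonneg hconv hdiff hf1 hfstar u
    constructor <;> [linarith; linarith]
  · push_neg at hcase  -- ε ≤ t0
    have ht0pos : 0 < t0 := by linarith
    have heq0 : deriv f t0 = u0 := by
      rcases fp_Tmap_spec hconv hdiff hf1 hfstar (fstar := fstar) u0 with ⟨_, heq⟩ | ⟨hz, _⟩
      · exact heq
      · have h0 : t0 = 0 := ht0.trans hz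
        linarith
    have hsl : deriv f (t0 - ε / 2) < u0 := by
      rw [← heq0]
      exact hsm (Set.mem_Ioi.2 (by linarith)) (Set.mem_Ioi.2 ht0pos) (by linarith)
    have keyL : ∀ u : ℝ, deriv f (t0 - ε / 2) < u → t0 - ε < Tmap f u := by
      intro u hu
      rcases fp_Tmap_spec hconv hdiff hf1 hfstar (fstar := fstar) u with ⟨hpos, heq⟩ | ⟨hz, hall⟩
      · by_contra hle
        push_neg at hle  -- Tmap f u ≤ t0 - ε
        have := hsm (Set.mem_Ioi.2 hpos) (Set.mem_Ioi.2 (by linarith : (0:ℝ) < t0 - ε / 2)) (by linarith)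
        rw [heq] at this
        linarith
      · exact absurd (hall _ (by linarith : (0:ℝ) < t0 - ε / 2)) (by linarith)
    refine ⟨min (deriv f (t0 + ε / 2) - u0) (u0 - deriv f (t0 - ε / 2)), by
      apply lt_min <;> linarith, fun {u} hu => ?_⟩
    rw [Real.dist_eq] at hu ⊢
    rw [abs_lt] at hu ⊢
    have hu1 := hu.1
    have hu2 := hu.2
    have hm1 : min (deriv f (t0 + ε / 2) - u0) (u0 - deriv f (t0 - ε / 2))
        ≤ deriv f (t0 + ε / 2) - u0 := min_le_left _ _
    have hm2 : min (deriv f (t0 + ε / 2) - u0) (u0 - deriv f (t0 - ε / 2))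
        ≤ u0 - deriv f (t0 - ε / 2) := min_le_right _ _
    have hR := keyR u (by linarith)
    have hL := keyL u (by linarith)
    constructor <;> linarith

end FPartitionAux

/-- f-partition function duality on a finite space: for a finite positive measure `q`
(given by positive weights), `f` strictly convex and differentiable on `(0,∞)` with
`f 1 = 0` (extended continuously at 0), `h` a (bounded) function, and `f*` the Fenchel
conjugate of `f`,
`sup_{p prob., p ≪ q} (∫ h dp - D(p‖q)) = inf_ρ (ρ + ∫ f*(h - ρ) dq)`. -/
theorem stmt11 {X : Type*} [Fintype X] [Nonempty X]
    (q : X → ℝ) (hq : ∀ x, 0 < q x)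
    (f : ℝ → ℝ)
    (hconv : StrictConvexOn ℝ (Ioi (0:ℝ)) f)
    (hdiff : ∀ x ∈ Ioi (0:ℝ), DifferentiableAt ℝ f x)
    (hf1 : f 1 = 0)
    (hcont : ContinuousWithinAt f (Ici (0:ℝ)) 0)
    (h : X → ℝ)
    (fstar : ℝ → ℝ)
    (hfstar : ∀ u : ℝ, IsLUB {z : ℝ | ∃ t : ℝ, 0 < t ∧ z = u * t - f t} (fstar u)) :
    sSup {z : ℝ | ∃ p : X → ℝ, (∀ x, 0 ≤ p x) ∧ (∑ x, p x = 1) ∧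
        z = ∑ x, h x * p x - ∑ x, q x * f (p x / q x)} =
      sInf {z : ℝ | ∃ ρ : ℝ, z = ρ + ∑ x, q x * fstar (h x - ρ)} := by
  classical
  have hsm := hconv.strictMonoOn_deriv hdiff
  -- weak duality
  have weak : ∀ (p : X → ℝ), (∀ x, 0 ≤ p x) → (∑ x, p x = 1) → ∀ ρ : ℝ,
      ∑ x, h x * p x - ∑ x, q x * f (p x / q x) ≤ ρ + ∑ x, q x * fstar (h x - ρ) := by
    intro p hp hsum ρ
    have key : ∀ x, h x * p x - ρ * p x - q x * f (p x / q x) ≤ q x * fstar (h x - ρ) := by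
      intro x
      rcases (hp x).eq_or_lt with heq | hlt
      · have : p x / q x = 0 := by rw [← heq]; simp
        rw [this, ← heq]
        have h0 := fp_neg_f0_le_fstar hcont hfstar (h x - ρ)
        have := mul_le_mul_of_nonneg_left h0 (hq x).le
        rw [mul_neg] at this
        linarith
      · have ht : 0 < p x / q x := div_pos hlt (hq x)
        obtain ⟨t, ht', hpx⟩ : ∃ t : ℝ, 0 < t ∧ p x = q x * t :=
          ⟨p x / q x, ht, (mul_div_cancel₀ _ (hq x).ne').symm⟩
        have hle := fp_le_fstar hfstar (u := h x - ρ) ht'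
        have hmul := mul_le_mul_of_nonneg_left hle (hq x).le
        rw [hpx, mul_div_cancel_left₀ _ (hq x).ne']
        calc h x * (q x * t) - ρ * (q x * t) - q x * f t
            = q x * ((h x - ρ) * t - f t) := by ring
          _ ≤ q x * fstar (h x - ρ) := hmul
    have hsum' : ∑ x, (h x * p x - ρ * p x - q x * f (p x / q x))
        ≤ ∑ x, q x * fstar (h x - ρ) := Finset.sum_le_sum fun x _ => key x
    have hexp : ∑ x, (h x * p x - ρ * p x - q x * f (p x / q x))
        = ∑ x, h x * p x - ρ - ∑ x, q x * f (p x / q x) := by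
      rw [Finset.sum_sub_distrib, Finset.sum_sub_distrib, ← Finset.mul_sum, hsum, mul_one]
    linarith [hexp ▸ hsum']
  -- the function φ
  set φ : ℝ → ℝ := fun ρ => ∑ x, q x * Tmap f (h x - ρ) with hφdef
  have φcont : Continuous φ := by
    apply continuous_finset_sum
    intro x _
    exact continuous_const.mul ((fp_Tmap_continuous hconv hdiff hf1 hfstar).comp
      (continuous_const.sub continuous_id))
  set Q : ℝ := ∑ x, q x with hQ
  have hQpos : 0 < Q := Finset.sum_pos (fun x _ => hq x) Finset.univ_nonempty
  set M : ℝ := Q⁻¹ with hM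
  have hMpos : 0 < M := inv_pos.2 hQpos
  -- ρ₁ : φ ρ₁ ≥ 1
  obtain ⟨ρ1, hρ1⟩ : ∃ ρ1, 1 ≤ φ ρ1 := by
    set m : ℝ := max M 1 with hm
    have hmpos : 0 < m := lt_of_lt_of_le hMpos (le_max_left _ _)
    refine ⟨Finset.univ.inf' Finset.univ_nonempty h - deriv f m, ?_⟩
    have hTge : ∀ x, M ≤ Tmap f (h x - (Finset.univ.inf' Finset.univ_nonempty h - deriv f m)) := by
      intro x
      have h1 : deriv f m ≤ h x - (Finset.univ.inf' Finset.univ_nonempty h - deriv f m) := by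
        have := Finset.inf'_le h (Finset.mem_univ x)
        linarith
      have hmono : Tmap f (deriv f m) ≤ Tmap f (h x - (Finset.univ.inf' Finset.univ_nonempty h - deriv f m)) := by
        rcases eq_or_lt_of_le h1 with heq | hlt
        · exact le_of_eq (congrArg (Tmap f) heq)
        · -- monotonicity of T
          rcases fp_Tmap_spec hconv hdiff hf1 hfstar (fstar := fstar) (deriv f m) with
            ⟨hpos, heq⟩ | ⟨hz, hall⟩
          · rcases fp_Tmap_spec hconv hdiff hf1 hfstar (fstar := fstar)
              (h x - (Finset.univ.inf' Finset.univ_nonempty h - deriv f m)) with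
              ⟨hpos', heq'⟩ | ⟨hz', hall'⟩
            · by_contra hc
              push_neg at hc
              have := hsm (Set.mem_Ioi.2 hpos') (Set.mem_Ioi.2 hpos) hc
              rw [heq, heq'] at this
              linarith
            · have := hall' _ hpos
              rw [heq] at this
              linarith
          · rw [hz]
            exact fp_Tmap_nonneg hconv hdiff hf1 hfstar _
      have := fp_Tmap_deriv hconv hdiff hf1 hfstar (fstar := fstar) hmpos
      calc M ≤ m := le_max_left _ _
        _ = Tmap f (deriv f m) := this.symm
        _ ≤ _ := hmono
    calc (1:ℝ) = Q * M := by rw [hM]; field_simp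
      _ = ∑ x, q x * M := by rw [hQ, Finset.sum_mul]
      _ ≤ φ _ := Finset.sum_le_sum fun x _ =>
          mul_le_mul_of_nonneg_left (hTge x) (hq x).le
  -- ρ₂ : φ ρ₂ ≤ 1
  obtain ⟨ρ2, hρ2⟩ : ∃ ρ2, φ ρ2 ≤ 1 := by
    refine ⟨Finset.univ.sup' Finset.univ_nonempty h - deriv f M, ?_⟩
    have hTle : ∀ x, Tmap f (h x - (Finset.univ.sup' Finset.univ_nonempty h - deriv f M)) ≤ M := by
      intro x
      have h1 : h x - (Finset.univ.sup' Finset.univ_nonempty h - deriv f M) ≤ deriv f M := by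
        have := Finset.le_sup' h (Finset.mem_univ x)
        linarith
      rcases fp_Tmap_spec hconv hdiff hf1 hfstar (fstar := fstar)
        (h x - (Finset.univ.sup' Finset.univ_nonempty h - deriv f M)) with
        ⟨hpos, heq⟩ | ⟨hz, _⟩
      · by_contra hc
        push_neg at hc
        have := hsm (Set.mem_Ioi.2 hMpos) (Set.mem_Ioi.2 hpos) hc
        rw [heq] at this
        linarith
      · rw [hz]; exact hMpos.le
    calc φ _ ≤ ∑ x, q x * M := Finset.sum_le_sum fun x _ =>
          mul_le_mul_of_nonneg_left (hTle x) (hq x).le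
      _ = Q * M := by rw [hQ, Finset.sum_mul]
      _ = 1 := by rw [hM]; field_simp
  -- IVT
  obtain ⟨ρ, -, hρ⟩ : ∃ ρ ∈ uIcc ρ1 ρ2, φ ρ = 1 := by
    have := intermediate_value_uIcc (a := ρ1) (b := ρ2) (f := φ) φcont.continuousOn
    have h1 : (1:ℝ) ∈ uIcc (φ ρ1) (φ ρ2) := by
      rw [Set.mem_uIcc]
      right
      exact ⟨hρ2, hρ1⟩
    obtain ⟨ρ, hρmem, hρeq⟩ := this h1
    exact ⟨ρ, hρmem, hρeq⟩
  -- the optimal p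
  set p : X → ℝ := fun x => q x * Tmap f (h x - ρ) with hp
  have hpnn : ∀ x, 0 ≤ p x := fun x =>
    mul_nonneg (hq x).le (fp_Tmap_nonneg hconv hdiff hf1 hfstar _)
  have hpsum : ∑ x, p x = 1 := hρ
  have hpdiv : ∀ x, p x / q x = Tmap f (h x - ρ) := fun x =>
    mul_div_cancel_left₀ _ (hq x).ne'
  set v : ℝ := ρ + ∑ x, q x * fstar (h x - ρ) with hv
  have hval : ∑ x, h x * p x - ∑ x, q x * f (p x / q x) = v := by
    have hterm : ∀ x, q x * fstar (h x - ρ)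
        = h x * p x - q x * f (p x / q x) - ρ * p x := by
      intro x
      rw [hpdiv x, fp_fstar_eq hconv hdiff hf1 hcont hfstar (h x - ρ)]
      simp only [hp]
      ring
    have : ∑ x, q x * fstar (h x - ρ)
        = ∑ x, h x * p x - ∑ x, q x * f (p x / q x) - ρ := by
      rw [Finset.sum_congr rfl fun x _ => hterm x, Finset.sum_sub_distrib,
        Finset.sum_sub_distrib, ← Finset.mul_sum, hpsum, mul_one]
    rw [hv, this]
    ring
  -- conclude
  have hvA : v ∈ {z : ℝ | ∃ p : X → ℝ, (∀ x, 0 ≤ p x) ∧ (∑ x, p x = 1) ∧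
      z = ∑ x, h x * p x - ∑ x, q x * f (p x / q x)} := ⟨p, hpnn, hpsum, hval.symm⟩
  have hvB : v ∈ {z : ℝ | ∃ ρ' : ℝ, z = ρ' + ∑ x, q x * fstar (h x - ρ')} := ⟨ρ, rfl⟩
  have hub : ∀ a ∈ {z : ℝ | ∃ p : X → ℝ, (∀ x, 0 ≤ p x) ∧ (∑ x, p x = 1) ∧
      z = ∑ x, h x * p x - ∑ x, q x * f (p x / q x)}, a ≤ v := by
    rintro a ⟨p', hp', hsum', rfl⟩
    exact (weak p' hp' hsum' ρ).trans_eq hv.symm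
  have hlb : ∀ b ∈ {z : ℝ | ∃ ρ' : ℝ, z = ρ' + ∑ x, q x * fstar (h x - ρ')}, v ≤ b := by
    rintro b ⟨ρ', rfl⟩
    rw [← hval]
    exact weak p hpnn hpsum ρ'
  rw [IsGreatest.csSup_eq ⟨hvA, hub⟩, IsLeast.csInf_eq ⟨hvB, hlb⟩]
end

section
/- Let q be a finite positive measure on X, f strictly convex differentiable with f(1)=0, and h : X → ℝ such that f*(h(x)) is q-integrable. Then sup over all finite positive measures p ≪ q of (∫ h dp - D(p‖q)) equals ∫ f*(h(x)) dq(x). -/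
open MeasureTheory Set Filter Topology ENNReal

noncomputable def dseq (n : ℕ) : ℝ :=
  if 0 < ((Denumerable.eqv ℚ).symm n) then (((Denumerable.eqv ℚ).symm n : ℚ) : ℝ) else 1

lemma dseq_pos (n : ℕ) : 0 < dseq n := by
  unfold dseq
  split_ifs with h
  · exact_mod_cast h
  · norm_num

lemma dseq_encode {s : ℚ} (hs : 0 < s) : dseq ((Denumerable.eqv ℚ) s) = (s : ℝ) := by
  unfold dseq
  rw [Equiv.symm_apply_apply]
  simp [hs]

noncomputable def phi (f : ℝ → ℝ) : ℕ → ℝ → ℝ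
  | 0 => fun u => max (-f 0) (u * dseq 0 - f (dseq 0))
  | (N+1) => fun u => max (phi f N u) (u * dseq (N+1) - f (dseq (N+1)))

lemma neg_f0_le_phi (f : ℝ → ℝ) (u : ℝ) : ∀ N, -f 0 ≤ phi f N u
  | 0 => le_max_left _ _
  | (N+1) => le_trans (neg_f0_le_phi f u N) (le_max_left _ _)

lemma le_phi_self (f : ℝ → ℝ) (u : ℝ) : ∀ N, u * dseq N - f (dseq N) ≤ phi f N u
  | 0 => le_max_right _ _
  | (N+1) => le_max_right _ _

lemma phi_mono (f : ℝ → ℝ) (u : ℝ) : Monotone (fun N => phi f N u) := by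
  apply monotone_nat_of_le_succ
  intro N
  exact le_max_left _ _

lemma phi_le (f : ℝ → ℝ) (u B : ℝ) (h0 : -f 0 ≤ B)
    (hB : ∀ n : ℕ, u * dseq n - f (dseq n) ≤ B) : ∀ N, phi f N u ≤ B
  | 0 => max_le h0 (hB 0)
  | (N+1) => max_le (phi_le f u B h0 hB N) (hB (N+1))

lemma phi_measurable {X : Type*} [MeasurableSpace X] (f : ℝ → ℝ) {h : X → ℝ}
    (hmeas : Measurable h) : ∀ N, Measurable (fun x => phi f N (h x))
  | 0 => measurable_const.max ((hmeas.mul_const _).sub_const _)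
  | (N+1) => ((phi_measurable f hmeas N).max ((hmeas.mul_const _).sub_const _))

lemma phi_tendsto (f : ℝ → ℝ) (hdiff : ∀ x ∈ Ioi (0:ℝ), DifferentiableAt ℝ f x) (u : ℝ) {L : ℝ}
    (hL : IsLUB {z : ℝ | ∃ t : ℝ, 0 < t ∧ z = u * t - f t} L) (h0 : -f 0 ≤ L) :
    Tendsto (fun N => phi f N u) atTop (𝓝 L) := by
  have hub : ∀ n : ℕ, u * dseq n - f (dseq n) ≤ L := fun n => hL.1 ⟨dseq n, dseq_pos n, rfl⟩
  have hbdd : BddAbove (Set.range fun N => phi f N u) := by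
    refine ⟨L, ?_⟩
    rintro z ⟨N, rfl⟩
    exact phi_le f u L h0 hub N
  have htendsto := tendsto_atTop_ciSup (phi_mono f u) hbdd
  have hsup : (⨆ N, phi f N u) = L := by
    apply le_antisymm
    · exact ciSup_le (phi_le f u L h0 hub)
    · apply hL.2
      rintro z ⟨t, ht, rfl⟩
      have hG : ContinuousAt (fun s : ℝ => u * s - f s) t :=
        (continuousAt_const.mul continuousAt_id).sub (hdiff t ht).continuousAt
      refine le_of_forall_pos_le_add ?_
      intro ε hε
      rcases Metric.continuousAt_iff.1 hG ε hε with ⟨δ, hδ, hδ'⟩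
      have hlo : max (t - δ) 0 < t := max_lt (by linarith) ht
      rcases exists_rat_btwn hlo with ⟨s, hs1, hs2⟩
      have hspos : (0:ℚ) < s := by exact_mod_cast ((le_max_right _ _).trans_lt hs1)
      have hdist : dist (s:ℝ) t < δ := by
        rw [Real.dist_eq, abs_of_nonpos (by linarith)]
        have h3 : t - δ < (s:ℝ) := (le_max_left _ _).trans_lt hs1
        linarith
      have h4 := hδ' hdist
      rw [Real.dist_eq] at h4
      have h5 := (abs_lt.1 h4).1
      have h2 : u * (s:ℝ) - f s ≤ ⨆ N, phi f N u := by
        have h6 := le_phi_self f u ((Denumerable.eqv ℚ) s)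
        rw [dseq_encode hspos] at h6
        exact h6.trans (le_ciSup hbdd _)
      linarith
  rwa [hsup] at htendsto

lemma exists_selection {X : Type*} [MeasurableSpace X] (f : ℝ → ℝ) {h : X → ℝ}
    (hmeas : Measurable h) : ∀ N : ℕ, ∃ ρ : X → ℝ, Measurable ρ ∧
      Measurable (fun x => f (ρ x)) ∧ (∀ x, 0 ≤ ρ x) ∧
      (∃ C : ℝ, ∀ x, ρ x ≤ C ∧ |f (ρ x)| ≤ C) ∧
      ∀ x, h x * ρ x - f (ρ x) = phi f N (h x) := by
  intro N
  induction N with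
  | zero =>
    set c := dseq 0 with hcdef
    have hc : 0 < c := dseq_pos 0
    have hAm : MeasurableSet {x : X | -f 0 ≤ h x * c - f c} :=
      measurableSet_le measurable_const ((hmeas.mul_const _).sub_const _)
    refine ⟨fun x => if -f 0 ≤ h x * c - f c then c else 0, ?_, ?_, ?_,
      ⟨max c (max |f c| |f 0|), ?_⟩, ?_⟩
    · exact Measurable.ite hAm measurable_const measurable_const
    · have heq : (fun x => f (if -f 0 ≤ h x * c - f c then c else 0)) =
        fun x => if -f 0 ≤ h x * c - f c then f c else f 0 := by
        funext x; split_ifs <;> rfl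
      rw [heq]; exact Measurable.ite hAm measurable_const measurable_const
    · intro x; dsimp only; split_ifs; exacts [hc.le, le_refl 0]
    · intro x
      constructor <;> dsimp only <;> split_ifs
      · exact le_max_left _ _
      · exact le_trans hc.le (le_max_left _ _)
      · exact le_trans (le_max_left _ _) (le_max_right _ _)
      · exact le_trans (le_max_right _ _) (le_max_right _ _)
    · intro x
      simp only [phi, ← hcdef]
      split_ifs with hx
      · exact (max_eq_right hx).symm
      · rw [mul_zero, zero_sub]
        exact (max_eq_left (le_of_not_ge hx)).symm
  | succ N ih =>
    obtain ⟨ρ, hρm, hfρm, hρ0, ⟨C, hC⟩, hρeq⟩ := ih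
    set c := dseq (N+1) with hcdef
    have hc : 0 < c := dseq_pos _
    have hAm : MeasurableSet {x : X | phi f N (h x) ≤ h x * c - f c} :=
      measurableSet_le (phi_measurable f hmeas N) ((hmeas.mul_const _).sub_const _)
    refine ⟨fun x => if phi f N (h x) ≤ h x * c - f c then c else ρ x, ?_, ?_, ?_,
      ⟨max C (max c |f c|), ?_⟩, ?_⟩
    · exact Measurable.ite hAm measurable_const hρm
    · have heq : (fun x => f (if phi f N (h x) ≤ h x * c - f c then c else ρ x)) =
        fun x => if phi f N (h x) ≤ h x * c - f c then f c else f (ρ x) := by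
        funext x; split_ifs <;> rfl
      rw [heq]; exact Measurable.ite hAm measurable_const hfρm
    · intro x; dsimp only; split_ifs; exacts [hc.le, hρ0 x]
    · intro x
      constructor <;> dsimp only <;> split_ifs
      · exact le_trans (le_max_left _ _) (le_max_right _ _)
      · exact le_trans (hC x).1 (le_max_left _ _)
      · exact le_trans (le_max_right _ _) (le_max_right _ _)
      · exact le_trans (hC x).2 (le_max_left _ _)
    · intro x
      simp only [phi, ← hcdef]
      split_ifs with hx
      · exact (max_eq_right hx).symm
      · rw [hρeq x]
        exact (max_eq_left (le_of_not_ge hx)).symm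

/-- Computing integrals by duality: for a finite positive measure `q`, `f` strictly convex
and differentiable on `(0,∞)` with `f 1 = 0`, and `h` such that `f* ∘ h` is `q`-integrable,
the supremum over finite positive measures `p ≪ q` of `∫ h dp - D(p‖q)` equals
`∫ f*(h x) dq x`. -/
theorem stmt12 {X : Type*} [MeasurableSpace X]
    (q : Measure X) [IsFiniteMeasure q]
    (f : ℝ → ℝ)
    (hconv : StrictConvexOn ℝ (Ioi (0:ℝ)) f)
    (hdiff : ∀ x ∈ Ioi (0:ℝ), DifferentiableAt ℝ f x)
    (hf1 : f 1 = 0)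
    (hcont : ContinuousWithinAt f (Ici (0:ℝ)) 0)
    (h : X → ℝ) (hmeas : Measurable h)
    (fstar : ℝ → ℝ)
    (hfstar : ∀ u : ℝ, IsLUB {z : ℝ | ∃ t : ℝ, 0 < t ∧ z = u * t - f t} (fstar u))
    (hint : Integrable (fun x => fstar (h x)) q) :
    IsLUB {z : ℝ | ∃ p : Measure X, IsFiniteMeasure p ∧ p ≪ q ∧
        Integrable h p ∧
        Integrable (fun x => f ((p.rnDeriv q x).toReal)) q ∧
        z = (∫ x, h x ∂p) - ∫ x, f ((p.rnDeriv q x).toReal) ∂q}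
      (∫ x, fstar (h x) ∂q) := by
  classical
  have hub : ∀ u t : ℝ, 0 < t → u * t - f t ≤ fstar u :=
    fun u t ht => (hfstar u).1 ⟨t, ht, rfl⟩
  have hneg : ∀ u : ℝ, -f 0 ≤ fstar u := by
    intro u
    have h1 : Tendsto (fun t : ℝ => u * t - f t) (𝓝[>] (0:ℝ)) (𝓝 (u * 0 - f 0)) := by
      refine Tendsto.sub ?_ ?_
      · exact ((continuous_const.mul continuous_id).tendsto 0).mono_left nhdsWithin_le_nhds
      · exact hcont.mono Ioi_subset_Ici_self
    have h2 : -f 0 = u * 0 - f 0 := by ring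
    rw [h2]
    refine le_of_tendsto h1 ?_
    filter_upwards [self_mem_nhdsWithin] with t ht
    exact hub u t ht
  set g : ℕ → X → ℝ := fun N x => phi f N (h x) with hg
  have hgmeas : ∀ N, Measurable (g N) := fun N => phi_measurable f hmeas N
  have hgle : ∀ N x, g N x ≤ fstar (h x) := fun N x =>
    phi_le f (h x) (fstar (h x)) (hneg _) (fun n => hub _ _ (dseq_pos n)) N
  have hgge : ∀ N x, -f 0 ≤ g N x := fun N x => neg_f0_le_phi f (h x) N
  have hgint : ∀ N, Integrable (g N) q := by
    intro N
    refine Integrable.mono' ((integrable_const |f 0|).add hint.abs)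
      ((hgmeas N).aestronglyMeasurable) (Eventually.of_forall fun x => ?_)
    rw [Real.norm_eq_abs, abs_le, Pi.add_apply]
    constructor
    · have h1 := hgge N x
      have h2 := abs_nonneg (fstar (h x))
      have h3 := le_abs_self (f 0)
      linarith
    · have h1 := hgle N x
      have h2 := le_abs_self (fstar (h x))
      have h3 := abs_nonneg (f 0)
      linarith
  have hgtendsto : ∀ x, Tendsto (fun N => g N x) atTop (𝓝 (fstar (h x))) :=
    fun x => phi_tendsto f hdiff (h x) (hfstar (h x)) (hneg (h x))
  have hMCT : Tendsto (fun N => ∫ x, g N x ∂q) atTop (𝓝 (∫ x, fstar (h x) ∂q)) :=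
    integral_tendsto_of_tendsto_of_monotone hgint hint
      (Eventually.of_forall fun x => phi_mono f (h x))
      (Eventually.of_forall hgtendsto)
  have hmem : ∀ N, (∫ x, g N x ∂q) ∈ {z : ℝ | ∃ p : Measure X, IsFiniteMeasure p ∧ p ≪ q ∧
      Integrable h p ∧
      Integrable (fun x => f ((p.rnDeriv q x).toReal)) q ∧
      z = (∫ x, h x ∂p) - ∫ x, f ((p.rnDeriv q x).toReal) ∂q} := by
    intro N
    obtain ⟨ρ, hρm, hfρm, hρ0, ⟨C, hC⟩, hρeq⟩ := exists_selection f hmeas N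
    set F : X → ℝ≥0∞ := fun x => ENNReal.ofReal (ρ x) with hF
    have hFmeas : Measurable F := hρm.ennreal_ofReal
    set p : Measure X := q.withDensity F with hp
    have hpfin : IsFiniteMeasure p := by
      rw [hp, hF]
      refine isFiniteMeasure_withDensity_ofReal
        (MeasureTheory.HasFiniteIntegral.of_bounded (C := C) (Eventually.of_forall fun x => ?_))
      rw [Real.norm_eq_abs, abs_of_nonneg (hρ0 x)]
      exact (hC x).1
    haveI := hpfin
    have hpac : p ≪ q := withDensity_absolutelyContinuous q F
    have hrn : p.rnDeriv q =ᵐ[q] F := Measure.rnDeriv_withDensity q hFmeas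
    have hrn' : (fun x => (p.rnDeriv q x).toReal) =ᵐ[q] ρ := by
      filter_upwards [hrn] with x hx
      rw [hx]
      exact ENNReal.toReal_ofReal (hρ0 x)
    have hhρint : Integrable (fun x => h x * ρ x) q := by
      refine Integrable.mono' ((hgint N).abs.add (integrable_const C))
        ((hmeas.mul hρm).aestronglyMeasurable) (Eventually.of_forall fun x => ?_)
      rw [Real.norm_eq_abs]
      have heq : h x * ρ x = g N x + f (ρ x) := by
        have := hρeq x; simp only [hg] at this ⊢; linarith
      rw [heq]
      calc |g N x + f (ρ x)| ≤ |g N x| + |f (ρ x)| := abs_add_le _ _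
        _ ≤ |g N x| + C := by linarith [(hC x).2]
    have hih : Integrable h p := by
      rw [hp, integrable_withDensity_iff hFmeas (Eventually.of_forall fun x => ENNReal.ofReal_lt_top)]
      refine hhρint.congr (Eventually.of_forall fun x => ?_)
      rw [hF]
      simp only
      rw [ENNReal.toReal_ofReal (hρ0 x)]
    have hfρint : Integrable (fun x => f (ρ x)) q :=
      Integrable.mono' (integrable_const C) hfρm.aestronglyMeasurable
        (Eventually.of_forall fun x => by rw [Real.norm_eq_abs]; exact (hC x).2)
    have hcongr : (fun x => f (ρ x)) =ᵐ[q] (fun x => f ((p.rnDeriv q x).toReal)) := by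
      filter_upwards [hrn'] with x hx
      rw [hx]
    have hifρ := hfρint.congr hcongr
    have hint_h_p : ∫ x, h x ∂p = ∫ x, h x * ρ x ∂q := by
      rw [← integral_rnDeriv_smul hpac]
      refine integral_congr_ae ?_
      filter_upwards [hrn'] with x hx
      rw [hx, smul_eq_mul, mul_comm]
    have hint_fρ : ∫ x, f ((p.rnDeriv q x).toReal) ∂q = ∫ x, f (ρ x) ∂q :=
      (integral_congr_ae hcongr).symm
    refine ⟨p, hpfin, hpac, hih, hifρ, ?_⟩
    rw [hint_h_p, hint_fρ, ← integral_sub hhρint hfρint]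
    refine integral_congr_ae (Eventually.of_forall fun x => ?_)
    exact (hρeq x).symm
  constructor
  · rintro z ⟨p, hpfin, hpac, hih, hifρ, rfl⟩
    haveI := hpfin
    have hρ0 : ∀ x, 0 ≤ (p.rnDeriv q x).toReal := fun x => ENNReal.toReal_nonneg
    have hhρint : Integrable (fun x => (p.rnDeriv q x).toReal * h x) q := by
      have := (integrable_rnDeriv_smul_iff hpac).2 hih
      simpa [smul_eq_mul] using this
    have h1 : ∫ x, h x ∂p = ∫ x, (p.rnDeriv q x).toReal * h x ∂q := by
      rw [← integral_rnDeriv_smul hpac]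
      simp_rw [smul_eq_mul]
    rw [h1, ← integral_sub hhρint hifρ]
    refine integral_mono (hhρint.sub hifρ) hint fun x => ?_
    rcases eq_or_lt_of_le (hρ0 x) with hx | hx
    · simp only [← hx, zero_mul, zero_sub]
      exact hneg (h x)
    · have h2 := hub (h x) _ hx
      simp only [Pi.sub_apply]
      have h3 : (p.rnDeriv q x).toReal * h x = h x * (p.rnDeriv q x).toReal := mul_comm _ _
      linarith
  · intro b hb
    exact le_of_tendsto hMCT (Eventually.of_forall fun N => hb (hmem N))
end

section
/- For λ ≥ 0, the function f(t) = (t-1)²/(λ + t) is operator convex on positive definite matrices: for Hermitian positive definite A, B and μ ∈ [0,1], f(μA + (1-μ)B) ≼ μ f(A) + (1-μ) f(B) in the Löwner order, where f is applied spectrally. -/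
open Matrix
open scoped ComplexOrder

variable {d : ℕ}

/-- Spectral application of a real function to a Hermitian matrix:
if `A = U diag(λ) U*` then `hermApply hA f = U diag(f λ) U*`. -/
noncomputable def hermApply {A : Matrix (Fin d) (Fin d) ℂ} (hA : A.IsHermitian)
    (f : ℝ → ℝ) : Matrix (Fin d) (Fin d) ℂ :=
  (hA.eigenvectorUnitary : Matrix (Fin d) (Fin d) ℂ) *
    diagonal (fun i => (f (hA.eigenvalues i) : ℂ)) *
    star (hA.eigenvectorUnitary : Matrix (Fin d) (Fin d) ℂ)

lemma psd_smul {M : Matrix (Fin d) (Fin d) ℂ} (hM : M.PosSemidef) {c : ℝ} (hc : 0 ≤ c) :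
    ((c : ℂ) • M).PosSemidef := by
  constructor
  · show ((c:ℂ) • M)ᴴ = _
    rw [conjTranspose_smul, hM.1.eq]
    simp [Complex.conj_ofReal]
  · intro x
    exact (hM.smul (show (0:ℂ) ≤ c by exact_mod_cast hc)).2 x

lemma pd_smul {M : Matrix (Fin d) (Fin d) ℂ} (hM : M.PosDef) {c : ℝ} (hc : 0 < c) :
    ((c : ℂ) • M).PosDef := by
  constructor
  · show ((c:ℂ) • M)ᴴ = _
    rw [conjTranspose_smul, hM.1.eq]
    simp [Complex.conj_ofReal]
  · intro x hx
    exact (hM.smul (show (0:ℂ) < c by exact_mod_cast hc)).2 hx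

/-- Operator convexity of the matrix inverse. -/
lemma inv_convex {X Y : Matrix (Fin d) (Fin d) ℂ} (hX : X.PosDef) (hY : Y.PosDef)
    {μ : ℝ} (hμ0 : 0 ≤ μ) (hμ1 : μ ≤ 1)
    (hCpd : ((μ : ℂ) • X + ((1 - μ : ℝ) : ℂ) • Y).PosDef) :
    ((μ : ℂ) • X⁻¹ + ((1 - μ : ℝ) : ℂ) • Y⁻¹
      - ((μ : ℂ) • X + ((1 - μ : ℝ) : ℂ) • Y)⁻¹).PosSemidef := by
  have main : ∀ C : Matrix (Fin d) (Fin d) ℂ, C.PosDef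
      → C = (μ : ℂ) • X + ((1 - μ : ℝ) : ℂ) • Y
      → ((μ : ℂ) • X⁻¹ + ((1 - μ : ℝ) : ℂ) • Y⁻¹ - C⁻¹).PosSemidef := by
    intro C hCpd hCeq
    have hZherm : C⁻¹.IsHermitian := hCpd.inv.1
    have hXi : X * X⁻¹ = 1 := mul_nonsing_inv X (isUnit_iff_isUnit_det X |>.mp hX.isUnit)
    have hXi' : X⁻¹ * X = 1 := nonsing_inv_mul X (isUnit_iff_isUnit_det X |>.mp hX.isUnit)
    have hYi : Y * Y⁻¹ = 1 := mul_nonsing_inv Y (isUnit_iff_isUnit_det Y |>.mp hY.isUnit)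
    have hYi' : Y⁻¹ * Y = 1 := nonsing_inv_mul Y (isUnit_iff_isUnit_det Y |>.mp hY.isUnit)
    have hZC : C⁻¹ * C = 1 := nonsing_inv_mul C (isUnit_iff_isUnit_det C |>.mp hCpd.isUnit)
    have eX : (C⁻¹ - X⁻¹)ᴴ * X * (C⁻¹ - X⁻¹) = C⁻¹ * X * C⁻¹ - C⁻¹ - C⁻¹ + X⁻¹ := by
      have hherm : (C⁻¹ - X⁻¹)ᴴ = C⁻¹ - X⁻¹ := hZherm.sub hX.inv.1
      rw [hherm]
      have expand : (C⁻¹ - X⁻¹) * X * (C⁻¹ - X⁻¹)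
          = C⁻¹ * X * C⁻¹ - C⁻¹ * (X * X⁻¹) - X⁻¹ * X * C⁻¹ + X⁻¹ * X * X⁻¹ := by
        noncomm_ring
      rw [expand, hXi, hXi']; simp
    have eY : (C⁻¹ - Y⁻¹)ᴴ * Y * (C⁻¹ - Y⁻¹) = C⁻¹ * Y * C⁻¹ - C⁻¹ - C⁻¹ + Y⁻¹ := by
      have hherm : (C⁻¹ - Y⁻¹)ᴴ = C⁻¹ - Y⁻¹ := hZherm.sub hY.inv.1
      rw [hherm]
      have expand : (C⁻¹ - Y⁻¹) * Y * (C⁻¹ - Y⁻¹)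
          = C⁻¹ * Y * C⁻¹ - C⁻¹ * (Y * Y⁻¹) - Y⁻¹ * Y * C⁻¹ + Y⁻¹ * Y * Y⁻¹ := by
        noncomm_ring
      rw [expand, hYi, hYi']; simp
    have hsum : (μ : ℂ) • (C⁻¹ * X * C⁻¹) + ((1 - μ : ℝ) : ℂ) • (C⁻¹ * Y * C⁻¹) = C⁻¹ := by
      calc (μ : ℂ) • (C⁻¹ * X * C⁻¹) + ((1 - μ : ℝ) : ℂ) • (C⁻¹ * Y * C⁻¹)
          = C⁻¹ * ((μ : ℂ) • X + ((1 - μ : ℝ) : ℂ) • Y) * C⁻¹ := by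
            simp only [Matrix.mul_add, Matrix.add_mul, Matrix.mul_smul, Matrix.smul_mul]
        _ = C⁻¹ * C * C⁻¹ := by rw [← hCeq]
        _ = C⁻¹ := by rw [hZC, one_mul]
    have hc1 : (μ : ℂ) + ((1 - μ : ℝ) : ℂ) = 1 := by push_cast; ring
    have key : (μ : ℂ) • X⁻¹ + ((1 - μ : ℝ) : ℂ) • Y⁻¹ - C⁻¹
        = (μ : ℂ) • ((C⁻¹ - X⁻¹)ᴴ * X * (C⁻¹ - X⁻¹))
          + ((1 - μ : ℝ) : ℂ) • ((C⁻¹ - Y⁻¹)ᴴ * Y * (C⁻¹ - Y⁻¹)) := by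
      rw [eX, eY]
      have free : (μ : ℂ) • (C⁻¹ * X * C⁻¹ - C⁻¹ - C⁻¹ + X⁻¹)
          + ((1 - μ : ℝ) : ℂ) • (C⁻¹ * Y * C⁻¹ - C⁻¹ - C⁻¹ + Y⁻¹)
          = ((μ : ℂ) • X⁻¹ + ((1 - μ : ℝ) : ℂ) • Y⁻¹)
            + (((μ : ℂ) • (C⁻¹ * X * C⁻¹) + ((1 - μ : ℝ) : ℂ) • (C⁻¹ * Y * C⁻¹))
              - ((μ : ℂ) + ((1 - μ : ℝ) : ℂ)) • (C⁻¹ + C⁻¹)) := by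
        module
      rw [free, hsum, hc1, one_smul]
      abel
    rw [key]
    exact (psd_smul (hX.posSemidef.conjTranspose_mul_mul_same _) hμ0).add
      (psd_smul (hY.posSemidef.conjTranspose_mul_mul_same _) (by linarith))
  exact main _ hCpd rfl

/-- Spectral representation of `t ↦ (t-1)²/(lam+t)` on a positive definite matrix. -/
lemma hermApply_repr (lam : ℝ) (hlam : 0 ≤ lam) {A : Matrix (Fin d) (Fin d) ℂ}
    (hA : A.PosDef) :
    hermApply hA.1 (fun t => (t - 1) ^ 2 / (lam + t))
      = A - ((lam + 2 : ℝ) : ℂ) • 1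
        + (((lam + 1) ^ 2 : ℝ) : ℂ) • (((lam : ℝ) : ℂ) • 1 + A)⁻¹ := by
  set U : Matrix (Fin d) (Fin d) ℂ := (hA.1.eigenvectorUnitary : Matrix (Fin d) (Fin d) ℂ)
    with hUdef
  have hU : U * star U = 1 := (Matrix.mem_unitaryGroup_iff).mp hA.1.eigenvectorUnitary.2
  have hU' : star U * U = 1 := (Matrix.mem_unitaryGroup_iff').mp hA.1.eigenvectorUnitary.2
  set ev : Fin d → ℝ := hA.1.eigenvalues with hev
  have hsmul : ∀ (c : ℂ) (v : Fin d → ℂ),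
      c • (U * diagonal v * star U) = U * diagonal (c • v) * star U := by
    intro c v
    rw [diagonal_smul, Matrix.mul_smul, Matrix.smul_mul]
  have hadd : ∀ v w : Fin d → ℂ,
      U * diagonal v * star U + U * diagonal w * star U
        = U * diagonal (fun i => v i + w i) * star U := by
    intro v w
    rw [← diagonal_add, Matrix.mul_add, Matrix.add_mul]
  have hsub : ∀ v w : Fin d → ℂ,
      U * diagonal v * star U - U * diagonal w * star U
        = U * diagonal (fun i => v i - w i) * star U := by
    intro v w
    rw [← diagonal_sub, Matrix.mul_sub, Matrix.sub_mul]
  have hspec : A = U * diagonal (fun i => ((ev i : ℝ) : ℂ)) * star U := by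
    convert hA.1.spectral_theorem using 2
    rw [Unitary.conjStarAlgAut_apply]
    rfl
  have hpos : ∀ i, 0 < lam + ev i := fun i => by
    have := hA.eigenvalues_pos i
    linarith
  have hne : ∀ i, ((lam + ev i : ℝ) : ℂ) ≠ 0 := fun i => by
    exact_mod_cast (hpos i).ne'
  have hone : (1 : Matrix (Fin d) (Fin d) ℂ) = U * diagonal (fun _ => (1 : ℂ)) * star U := by
    rw [diagonal_one, mul_one, hU]
  have hlamA : ((lam : ℝ) : ℂ) • 1 + A
      = U * diagonal (fun i => ((lam + ev i : ℝ) : ℂ)) * star U := by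
    rw [hspec, hone, hsmul, hadd]
    congr 2
    funext i
    simp only [Pi.smul_apply, smul_eq_mul, mul_one]
    push_cast
    ring
  have hinv : (((lam : ℝ) : ℂ) • 1 + A)⁻¹
      = U * diagonal (fun i => ((lam + ev i : ℝ) : ℂ)⁻¹) * star U := by
    apply inv_eq_right_inv
    rw [hlamA]
    calc U * diagonal (fun i => ((lam + ev i : ℝ) : ℂ)) * star U
          * (U * diagonal (fun i => ((lam + ev i : ℝ) : ℂ)⁻¹) * star U)
        = U * diagonal (fun i => ((lam + ev i : ℝ) : ℂ)) * (star U * U)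
          * diagonal (fun i => ((lam + ev i : ℝ) : ℂ)⁻¹) * star U := by
          simp only [Matrix.mul_assoc]
      _ = U * (diagonal (fun i => ((lam + ev i : ℝ) : ℂ))
          * diagonal (fun i => ((lam + ev i : ℝ) : ℂ)⁻¹)) * star U := by
          rw [hU']; simp only [Matrix.mul_assoc, Matrix.mul_one]
      _ = 1 := by
          rw [diagonal_mul_diagonal]
          have : (fun i => ((lam + ev i : ℝ) : ℂ) * ((lam + ev i : ℝ) : ℂ)⁻¹)
              = fun _ => (1 : ℂ) := by
            funext i; exact mul_inv_cancel₀ (hne i)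
          rw [this, diagonal_one, mul_one, hU]
  unfold hermApply
  rw [hinv]
  simp only [← hUdef, ← hev]
  rw [hspec, hone, hsmul, hsmul, hsub, hadd]
  congr 1
  congr 1
  rw [diagonal_eq_diagonal_iff]
  intro i
  simp only [Pi.smul_apply, smul_eq_mul, mul_one]
  have h : ((lam : ℂ) + (ev i : ℂ)) ≠ 0 := by exact_mod_cast hne i
  push_cast
  field_simp
  ring

/-- For `λ ≥ 0`, the function `f t = (t-1)²/(λ+t)` is operator convex on positive
definite matrices: for Hermitian positive definite `A, B` and `μ ∈ [0,1]`,
`f(μA + (1-μ)B) ≼ μ f(A) + (1-μ) f(B)` in the Löwner order. -/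
theorem stmt13 (lam : ℝ) (hlam : 0 ≤ lam)
    (A B : Matrix (Fin d) (Fin d) ℂ)
    (hA : A.PosDef) (hB : B.PosDef)
    (μ : ℝ) (hμ : μ ∈ Set.Icc (0:ℝ) 1)
    (hC : ((μ : ℂ) • A + ((1 - μ : ℝ) : ℂ) • B).IsHermitian) :
    let f : ℝ → ℝ := fun t => (t - 1) ^ 2 / (lam + t)
    ((μ : ℂ) • hermApply hA.1 f + ((1 - μ : ℝ) : ℂ) • hermApply hB.1 f
      - hermApply hC f).PosSemidef := by
  intro f
  obtain ⟨hμ0, hμ1⟩ := hμ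
  have hCpd : ((μ : ℂ) • A + ((1 - μ : ℝ) : ℂ) • B).PosDef := by
    rcases eq_or_lt_of_le hμ1 with h1 | h1
    · subst h1
      simpa using hA
    · exact Matrix.PosDef.posSemidef_add (psd_smul hA.posSemidef hμ0) (pd_smul hB (by linarith))
  have hCeq : hermApply hC f = hermApply hCpd.1 f := rfl
  have hXpd : (((lam : ℝ) : ℂ) • 1 + A).PosDef :=
    Matrix.PosDef.posSemidef_add (psd_smul Matrix.PosSemidef.one hlam) hA
  have hYpd : (((lam : ℝ) : ℂ) • 1 + B).PosDef :=
    Matrix.PosDef.posSemidef_add (psd_smul Matrix.PosSemidef.one hlam) hB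
  have hcomb : (μ : ℂ) • (((lam : ℝ) : ℂ) • 1 + A)
      + ((1 - μ : ℝ) : ℂ) • (((lam : ℝ) : ℂ) • 1 + B)
      = ((lam : ℝ) : ℂ) • 1 + ((μ : ℂ) • A + ((1 - μ : ℝ) : ℂ) • B) := by
    match_scalars <;> push_cast <;> ring
  have hCombPd : ((μ : ℂ) • (((lam : ℝ) : ℂ) • 1 + A)
      + ((1 - μ : ℝ) : ℂ) • (((lam : ℝ) : ℂ) • 1 + B)).PosDef := by
    rw [hcomb]
    exact Matrix.PosDef.posSemidef_add (psd_smul Matrix.PosSemidef.one hlam) hCpd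
  have hD := inv_convex hXpd hYpd hμ0 hμ1 hCombPd
  rw [hcomb] at hD
  have hres := psd_smul hD (sq_nonneg (lam + 1))
  have hrw : ((μ : ℂ) • hermApply hA.1 f + ((1 - μ : ℝ) : ℂ) • hermApply hB.1 f
      - hermApply hC f)
      = (((lam + 1) ^ 2 : ℝ) : ℂ) •
        ((μ : ℂ) • (((lam : ℝ) : ℂ) • 1 + A)⁻¹
          + ((1 - μ : ℝ) : ℂ) • (((lam : ℝ) : ℂ) • 1 + B)⁻¹
          - (((lam : ℝ) : ℂ) • 1 + ((μ : ℂ) • A + ((1 - μ : ℝ) : ℂ) • B))⁻¹) := by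
    rw [hCeq, hermApply_repr lam hlam hA, hermApply_repr lam hlam hB,
      hermApply_repr lam hlam hCpd]
    match_scalars <;> push_cast <;> ring
  rw [hrw]
  exact hres
end
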